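/- arXiv:2106.13224 — 2 statements merged into one kernel-verified Lean document; each statement's English description precedes it below -/
import Mathlib

section
/- Let 𝓐 ⊆ 𝓑 be two arrangements in the same complex vector space V with equal centres T(𝓐) = T(𝓑). If 𝓐 is irreducible then 𝓑 is also irreducible. In particular, if 𝓐 and 𝓑 are both essential, then irreducibility of 𝓐 implies irreducibility of 𝓑. -/
open scoped Classical

noncomputable section

variable {V : Type*} [AddCommGroup V] [Module ℂ V]

/-- A linear hyperplane in `V`: the kernel of a non-zero linear functional. -/
def IsHyperplane (H : Submodule ℂ V) : Prop :=
  ∃ f : Module.Dual ℂ V, f ≠ 0 ∧ H = LinearMap.ker f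

/-- An arrangement: every member of the finite set `𝓗` is a linear hyperplane. -/
def IsArrangement (𝓗 : Finset (Submodule ℂ V)) : Prop :=
  ∀ H ∈ 𝓗, IsHyperplane H

/-- The span `W(𝓗) ⊆ V⋆` of the defining functionals of the members of `𝓗`,
i.e. the supremum of the dual annihilators of the hyperplanes. -/
def arrSpan (𝓗 : Finset (Submodule ℂ V)) : Submodule ℂ (Module.Dual ℂ V) :=
  ⨆ H ∈ 𝓗, Submodule.dualAnnihilator H

/-- The centre `T(𝓗)`: the common intersection of the members of `𝓗`. -/
def arrCentre (𝓗 : Finset (Submodule ℂ V)) : Submodule ℂ V :=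
  ⨅ H ∈ 𝓗, H

/-- `𝓗` is essential if its centre is zero. -/
def ArrEssential (𝓗 : Finset (Submodule ℂ V)) : Prop :=
  arrCentre 𝓗 = ⊥

/-- `𝓗` is reducible if it admits a u-plus decomposition into two non-empty parts:
a partition `𝓗 = 𝓗₁ ⊎ 𝓗₂` with `W(𝓗) = W(𝓗₁) ⊕ W(𝓗₂)`. -/
def ArrReducible (𝓗 : Finset (Submodule ℂ V)) : Prop :=
  ∃ 𝓗₁ 𝓗₂ : Finset (Submodule ℂ V), 𝓗₁.Nonempty ∧ 𝓗₂.Nonempty ∧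
    Disjoint 𝓗₁ 𝓗₂ ∧ 𝓗₁ ∪ 𝓗₂ = 𝓗 ∧ Disjoint (arrSpan 𝓗₁) (arrSpan 𝓗₂)

/-- `𝓗` is irreducible if it is not reducible. -/
def ArrIrreducible (𝓗 : Finset (Submodule ℂ V)) : Prop :=
  ¬ ArrReducible 𝓗

lemma arrSpan_mono {𝓐 𝓑 : Finset (Submodule ℂ V)} (h : 𝓐 ⊆ 𝓑) :
    arrSpan 𝓐 ≤ arrSpan 𝓑 := by
  apply iSup_le; intro H
  apply iSup_le; intro hH
  exact le_iSup_of_le H (le_iSup_of_le (h hH) le_rfl)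

lemma arrCentre_eq_dualCoannihilator (𝓗 : Finset (Submodule ℂ V)) :
    arrCentre 𝓗 = (arrSpan 𝓗).dualCoannihilator := by
  simp only [arrSpan, arrCentre, Submodule.dualCoannihilator_iSup_eq,
    Subspace.dualAnnihilator_dualCoannihilator_eq]

/-- If `𝓐 ⊆ 𝓑` are arrangements with equal centres and `𝓐` is
irreducible, then `𝓑` is irreducible. -/
theorem irreducible_of_subarrangement_of_centre_eq
    [FiniteDimensional ℂ V]
    (𝓐 𝓑 : Finset (Submodule ℂ V)) (harr : IsArrangement 𝓑) (hsub : 𝓐 ⊆ 𝓑)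
    (hcentre : arrCentre 𝓐 = arrCentre 𝓑) (hA : ArrIrreducible 𝓐) :
    ArrIrreducible 𝓑 := by
  -- equal centres give equal spans
  have hspan : arrSpan 𝓐 = arrSpan 𝓑 := by
    have h1 : (arrSpan 𝓐).dualCoannihilator = (arrSpan 𝓑).dualCoannihilator := by
      rw [← arrCentre_eq_dualCoannihilator, ← arrCentre_eq_dualCoannihilator, hcentre]
    have := congrArg Submodule.dualAnnihilator h1
    rwa [Subspace.dualCoannihilator_dualAnnihilator_eq,
      Subspace.dualCoannihilator_dualAnnihilator_eq] at this
  rintro ⟨𝓑₁, 𝓑₂, h1ne, h2ne, hdisj, huni, hsd⟩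
  -- a nonempty subarrangement of 𝓑 has nontrivial span
  have key : ∀ 𝓒 : Finset (Submodule ℂ V), 𝓒 ⊆ 𝓑 → 𝓒.Nonempty → arrSpan 𝓒 ≠ ⊥ := by
    rintro 𝓒 hC ⟨H, hH⟩ hbot
    obtain ⟨f, hf, hker⟩ := harr H (hC hH)
    have hfmem : f ∈ arrSpan 𝓒 := by
      refine Submodule.mem_iSup_of_mem H (Submodule.mem_iSup_of_mem hH ?_)
      rw [Submodule.mem_dualAnnihilator]
      intro w hw
      rw [hker] at hw
      exact hw
    rw [hbot] at hfmem
    exact hf (by simpa using hfmem)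
  -- if 𝓐 misses one of the parts, derive a contradiction
  have main : ∀ 𝓒₁ 𝓒₂ : Finset (Submodule ℂ V), 𝓒₁ ⊆ 𝓑 → 𝓒₁.Nonempty →
      𝓐 ⊆ 𝓒₂ → Disjoint (arrSpan 𝓒₁) (arrSpan 𝓒₂) → False := by
    intro 𝓒₁ 𝓒₂ hC1 hC1ne hAC2 hd
    have h1 : arrSpan 𝓒₁ ≤ arrSpan 𝓑 := arrSpan_mono hC1
    have h2 : arrSpan 𝓑 ≤ arrSpan 𝓒₂ := hspan ▸ arrSpan_mono hAC2
    exact key 𝓒₁ hC1 hC1ne (le_bot_iff.mp (hd le_rfl (le_trans h1 h2)))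
  -- both intersections are nonempty
  by_cases he1 : (𝓐 ∩ 𝓑₁).Nonempty
  · by_cases he2 : (𝓐 ∩ 𝓑₂).Nonempty
    · -- build decomposition of 𝓐
      apply hA
      refine ⟨𝓐 ∩ 𝓑₁, 𝓐 ∩ 𝓑₂, he1, he2, ?_, ?_, ?_⟩
      · exact hdisj.mono (Finset.inter_subset_right) (Finset.inter_subset_right)
      · rw [← Finset.inter_union_distrib_left, huni]
        exact Finset.inter_eq_left.mpr hsub
      · exact hsd.mono (arrSpan_mono Finset.inter_subset_right)
          (arrSpan_mono Finset.inter_subset_right)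
    · -- 𝓐 ⊆ 𝓑₁
      have : 𝓐 ⊆ 𝓑₁ := by
        intro H hH
        have hHB : H ∈ 𝓑₁ ∪ 𝓑₂ := huni ▸ hsub hH
        rcases Finset.mem_union.mp hHB with h | h
        · exact h
        · exact absurd ⟨H, Finset.mem_inter.mpr ⟨hH, h⟩⟩ he2
      exact (main 𝓑₂ 𝓑₁ (huni ▸ Finset.subset_union_right) h2ne this hsd.symm).elim
  · -- 𝓐 ⊆ 𝓑₂
    have : 𝓐 ⊆ 𝓑₂ := by
      intro H hH
      have hHB : H ∈ 𝓑₁ ∪ 𝓑₂ := huni ▸ hsub hH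
      rcases Finset.mem_union.mp hHB with h | h
      · exact absurd ⟨H, Finset.mem_inter.mpr ⟨hH, h⟩⟩ he1
      · exact h
    exact (main 𝓑₁ 𝓑₂ (huni ▸ Finset.subset_union_left) h1ne this hsd).elim
end
end

section
/- Let (V, 𝓗) be an arrangement with |𝓗| = dim V + 1 = n + 1. Then 𝓗 is essential and irreducible if and only if there is a linear isomorphism V ≅ ℂⁿ carrying 𝓗 onto the standard arrangement consisting of the n + 1 hyperplanes {z₁ = 0}, …, {z_n = 0}, {z₁ + ⋯ + z_n = 0}. -/
open scoped Classical

noncomputable section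

variable {V : Type*} [AddCommGroup V] [Module ℂ V]

/-- The standard arrangement of `n + 1` hyperplanes in general position in `ℂⁿ`:
the coordinate hyperplanes `{zᵢ = 0}` together with `{z₁ + ⋯ + z_n = 0}`. -/
def stdArrangement (n : ℕ) : Finset (Submodule ℂ (Fin n → ℂ)) :=
  (Finset.univ.image fun i : Fin n =>
      LinearMap.ker (LinearMap.proj i : (Fin n → ℂ) →ₗ[ℂ] ℂ)) ∪
    {LinearMap.ker (∑ i : Fin n, (LinearMap.proj i : (Fin n → ℂ) →ₗ[ℂ] ℂ))}

/-! ### Auxiliary lemmas -/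

lemma mem_arrSpan_of_mem {𝓗 : Finset (Submodule ℂ V)} {H : Submodule ℂ V}
    (hH : H ∈ 𝓗) {f : Module.Dual ℂ V} (hf : ∀ x ∈ H, f x = 0) : f ∈ arrSpan 𝓗 := by
  have h1 : f ∈ H.dualAnnihilator := (Submodule.mem_dualAnnihilator f).2 hf
  exact (le_iSup₂ (f := fun H (_ : H ∈ 𝓗) => Submodule.dualAnnihilator H) H hH) h1

lemma dualAnn_ker_le [FiniteDimensional ℂ V] (f : Module.Dual ℂ V) :
    (LinearMap.ker f).dualAnnihilator ≤ Submodule.span ℂ {f} := by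
  intro g hg
  rw [Submodule.mem_dualAnnihilator] at hg
  have h : ⨅ _ : Unit, LinearMap.ker f ≤ LinearMap.ker g := by
    rw [iInf_const]
    intro x hx
    exact LinearMap.mem_ker.2 (hg x hx)
  have := FiniteDimensional.mem_span_of_iInf_ker_le_ker (L := fun _ : Unit => f) h
  simpa [Set.range_const] using this

lemma arrSpan_image_eq {ι : Type*} [FiniteDimensional ℂ V] (Hf : ι → Submodule ℂ V)
    (F : ι → Module.Dual ℂ V) (h : ∀ i, Hf i = LinearMap.ker (F i)) (T : Finset ι) :
    arrSpan (T.image Hf) = Submodule.span ℂ (F '' T) := by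
  apply le_antisymm
  · apply iSup₂_le
    intro K hK
    rw [Finset.mem_image] at hK
    obtain ⟨i, hi, rfl⟩ := hK
    rw [h i]
    refine (dualAnn_ker_le _).trans (Submodule.span_mono ?_)
    simp only [Set.singleton_subset_iff]
    exact ⟨i, hi, rfl⟩
  · rw [Submodule.span_le]
    rintro g ⟨i, hi, rfl⟩
    refine mem_arrSpan_of_mem (Finset.mem_image_of_mem Hf hi) ?_
    intro x hx
    rw [h i] at hx
    exact hx

lemma arrSpan_eq_top_of_essential [FiniteDimensional ℂ V] {𝓗 : Finset (Submodule ℂ V)}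
    (h : arrCentre 𝓗 = ⊥) : arrSpan 𝓗 = ⊤ := by
  have h1 : (⨅ H : ↥𝓗, (H : Submodule ℂ V)) = ⊥ := by
    rw [← h, arrCentre, iInf_subtype]
  have h2 := congrArg Submodule.dualAnnihilator h1
  rw [Subspace.dualAnnihilator_iInf_eq, Submodule.dualAnnihilator_bot] at h2
  rw [arrSpan, iSup_subtype']
  exact h2

section Transfer

variable {W : Type*} [AddCommGroup W] [Module ℂ W]

lemma map_equiv_ker (e : V ≃ₗ[ℂ] W) (f : Module.Dual ℂ V) :
    Submodule.map e.toLinearMap (LinearMap.ker f) = LinearMap.ker (f ∘ₗ e.symm.toLinearMap) := by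
  ext x
  rw [show e.toLinearMap = (e : V →ₗ[ℂ] W) from rfl, Submodule.mem_map_equiv]
  simp

lemma arrCentre_image (e : V ≃ₗ[ℂ] W) (𝓗 : Finset (Submodule ℂ V)) :
    arrCentre (𝓗.image fun H => Submodule.map e.toLinearMap H)
      = Submodule.map e.toLinearMap (arrCentre 𝓗) := by
  ext x
  rw [show e.toLinearMap = (e : V →ₗ[ℂ] W) from rfl, Submodule.mem_map_equiv]
  simp only [arrCentre, Submodule.mem_iInf, Finset.mem_image, forall_exists_index, and_imp]
  constructor
  · intro hx H hH
    have := hx (Submodule.map e.toLinearMap H) H hH rfl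
    rwa [show e.toLinearMap = (e : V →ₗ[ℂ] W) from rfl, Submodule.mem_map_equiv] at this
  · rintro hx K H hH rfl
    rw [show e.toLinearMap = (e : V →ₗ[ℂ] W) from rfl, Submodule.mem_map_equiv]
    exact hx H hH

lemma dualAnn_map (e : V ≃ₗ[ℂ] W) (H : Submodule ℂ V) :
    (Submodule.map e.toLinearMap H).dualAnnihilator
      = Submodule.map e.symm.dualMap.toLinearMap H.dualAnnihilator := by
  ext f
  simp only [Submodule.mem_dualAnnihilator, Submodule.mem_map, LinearMap.mem_range]
  constructor
  · intro hf
    refine ⟨e.dualMap f, ?_, ?_⟩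
    · intro x hx
      exact hf _ ⟨x, hx, rfl⟩
    · ext v; simp [LinearEquiv.dualMap_apply]
  · rintro ⟨g, hg, rfl⟩ w ⟨x, hx, rfl⟩
    simp only [LinearMap.coe_comp, LinearEquiv.coe_coe, Function.comp_apply,
      LinearEquiv.dualMap_apply, LinearEquiv.symm_apply_apply]
    exact hg x hx

lemma arrSpan_image_equiv (e : V ≃ₗ[ℂ] W) (S : Finset (Submodule ℂ V)) :
    arrSpan (S.image fun H => Submodule.map e.toLinearMap H)
      = Submodule.map e.symm.dualMap.toLinearMap (arrSpan S) := by
  have h1 : arrSpan (S.image fun H => Submodule.map e.toLinearMap H)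
      = ⨆ H ∈ S, (Submodule.map e.toLinearMap H).dualAnnihilator := by
    apply le_antisymm
    · apply iSup₂_le
      intro K hK
      rw [Finset.mem_image] at hK
      obtain ⟨H, hH, rfl⟩ := hK
      exact le_iSup₂ (f := fun H (_ : H ∈ S) => (Submodule.map e.toLinearMap H).dualAnnihilator) H hH
    · apply iSup₂_le
      intro H hH
      exact le_iSup₂ (f := fun K (_ : K ∈ S.image fun H => Submodule.map e.toLinearMap H) =>
        K.dualAnnihilator) _ (Finset.mem_image_of_mem _ hH)
  rw [h1]
  simp_rw [dualAnn_map e]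
  rw [arrSpan, iSup_subtype', iSup_subtype', Submodule.map_iSup]

lemma disjoint_map_of_injective {E : Module.Dual ℂ V →ₗ[ℂ] Module.Dual ℂ W}
    (hE : Function.Injective E) {p q : Submodule ℂ (Module.Dual ℂ V)} (h : Disjoint p q) :
    Disjoint (Submodule.map E p) (Submodule.map E q) := by
  rw [Submodule.disjoint_def] at h ⊢
  rintro x ⟨y, hy, rfl⟩ ⟨z, hz, hzy⟩
  obtain rfl : z = y := hE hzy
  rw [h z hy hz, map_zero]

end Transfer

/-! ### The standard arrangement is essential and irreducible -/

lemma std_essential (n : ℕ) : arrCentre (stdArrangement n) = ⊥ := by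
  rw [eq_bot_iff]
  intro x hx
  simp only [arrCentre, Submodule.mem_iInf] at hx
  have hx' : ∀ i : Fin n, x i = 0 := by
    intro i
    have hmem : LinearMap.ker (LinearMap.proj i : (Fin n → ℂ) →ₗ[ℂ] ℂ) ∈ stdArrangement n :=
      Finset.mem_union_left _ (Finset.mem_image_of_mem _ (Finset.mem_univ i))
    have := hx _ hmem
    simpa using this
  simp only [Submodule.mem_bot]
  funext i
  exact hx' i

lemma std_irr_aux {n : ℕ} (P₁ P₂ : Finset (Submodule ℂ (Fin n → ℂ)))
    (h1 : P₁.Nonempty) (hd : Disjoint P₁ P₂) (hu : P₁ ∪ P₂ = stdArrangement n)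
    (hs : LinearMap.ker (∑ i : Fin n, (LinearMap.proj i : (Fin n → ℂ) →ₗ[ℂ] ℂ)) ∈ P₂) :
    ¬ Disjoint (arrSpan P₁) (arrSpan P₂) := by
  intro hdisj
  obtain ⟨K, hK⟩ := h1
  have hKstd : K ∈ stdArrangement n := hu ▸ Finset.mem_union_left _ hK
  rw [stdArrangement, Finset.mem_union, Finset.mem_image, Finset.mem_singleton] at hKstd
  have ⟨a₀, ha₀⟩ : ∃ a : Fin n, LinearMap.ker (LinearMap.proj a : (Fin n → ℂ) →ₗ[ℂ] ℂ) ∈ P₁ := by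
    rcases hKstd with ⟨a, _, rfl⟩ | rfl
    · exact ⟨a, hK⟩
    · exact absurd hs (Finset.disjoint_left.mp hd hK)
  set A : Finset (Fin n) := Finset.univ.filter
    (fun a => LinearMap.ker (LinearMap.proj a : (Fin n → ℂ) →ₗ[ℂ] ℂ) ∈ P₁) with hA
  have ha₀A : a₀ ∈ A := by simp [hA, ha₀]
  set φ : Module.Dual ℂ (Fin n → ℂ) := ∑ a ∈ A, (LinearMap.proj a : (Fin n → ℂ) →ₗ[ℂ] ℂ) with hφ
  have hφ1 : φ ∈ arrSpan P₁ := by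
    apply Submodule.sum_mem
    intro a ha
    rw [hA, Finset.mem_filter] at ha
    exact mem_arrSpan_of_mem ha.2 (fun x hx => hx)
  have hφ2 : φ ∈ arrSpan P₂ := by
    have hsplit := Finset.sum_filter_add_sum_filter_not Finset.univ
      (fun a => LinearMap.ker (LinearMap.proj a : (Fin n → ℂ) →ₗ[ℂ] ℂ) ∈ P₁)
      (fun a => (LinearMap.proj a : (Fin n → ℂ) →ₗ[ℂ] ℂ))
    have : φ = (∑ a : Fin n, (LinearMap.proj a : (Fin n → ℂ) →ₗ[ℂ] ℂ))
        - ∑ a ∈ Finset.univ.filter (fun a =>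
            ¬ LinearMap.ker (LinearMap.proj a : (Fin n → ℂ) →ₗ[ℂ] ℂ) ∈ P₁),
            (LinearMap.proj a : (Fin n → ℂ) →ₗ[ℂ] ℂ) := by
      rw [← hsplit, add_sub_cancel_right]
    rw [this]
    apply Submodule.sub_mem
    · exact mem_arrSpan_of_mem hs (fun x hx => hx)
    · apply Submodule.sum_mem
      intro a ha
      rw [Finset.mem_filter] at ha
      have hstd : LinearMap.ker (LinearMap.proj a : (Fin n → ℂ) →ₗ[ℂ] ℂ) ∈ stdArrangement n :=
        Finset.mem_union_left _ (Finset.mem_image_of_mem _ (Finset.mem_univ a))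
      have : LinearMap.ker (LinearMap.proj a : (Fin n → ℂ) →ₗ[ℂ] ℂ) ∈ P₂ := by
        rcases Finset.mem_union.mp (hu ▸ hstd) with h | h
        · exact absurd h ha.2
        · exact h
      exact mem_arrSpan_of_mem this (fun x hx => hx)
  have hφ0 : φ = 0 := Submodule.disjoint_def.mp hdisj φ hφ1 hφ2
  have : φ (Pi.single a₀ 1) = 1 := by
    rw [hφ]
    simp only [LinearMap.coe_sum, Finset.sum_apply, LinearMap.proj_apply]
    rw [Finset.sum_eq_single a₀]
    · simp
    · intro b _ hb; exact Pi.single_eq_of_ne hb 1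
    · intro h; exact absurd ha₀A h
  rw [hφ0] at this
  simp at this

lemma std_irreducible (n : ℕ) : ¬ ArrReducible (stdArrangement n) := by
  rintro ⟨P₁, P₂, h1, h2, hd, hu, hsp⟩
  have hs : LinearMap.ker (∑ i : Fin n, (LinearMap.proj i : (Fin n → ℂ) →ₗ[ℂ] ℂ))
      ∈ stdArrangement n :=
    Finset.mem_union_right _ (Finset.mem_singleton_self _)
  rcases Finset.mem_union.mp (hu ▸ hs) with h | h
  · exact std_irr_aux P₂ P₁ h2 hd.symm (by rw [Finset.union_comm, hu]) h hsp.symm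
  · exact std_irr_aux P₁ P₂ h1 hd hu h hsp

/-- An arrangement of `dim V + 1` hyperplanes is essential and
irreducible iff it is linearly isomorphic to the standard arrangement
`{z₁ = 0}, …, {z_n = 0}, {z₁ + ⋯ + z_n = 0}` in `ℂⁿ`. -/
theorem essential_irreducible_iff_std
    [FiniteDimensional ℂ V]
    (𝓗 : Finset (Submodule ℂ V)) (harr : IsArrangement 𝓗)
    (hcard : 𝓗.card = Module.finrank ℂ V + 1) :
    (ArrEssential 𝓗 ∧ ArrIrreducible 𝓗) ↔
      ∃ e : V ≃ₗ[ℂ] (Fin (Module.finrank ℂ V) → ℂ),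
        𝓗.image (fun H => Submodule.map e.toLinearMap H)
          = stdArrangement (Module.finrank ℂ V) := by
  constructor
  · rintro ⟨hess, hirr⟩
    set n := Module.finrank ℂ V with hn
    have hcard' : Fintype.card ↥𝓗 = n + 1 := by rw [Fintype.card_coe, hcard]
    set σ : Fin (n + 1) ≃ ↥𝓗 := (Fintype.equivFinOfCardEq hcard').symm with hσ
    set Hs : Fin (n + 1) → Submodule ℂ V := fun i => (σ i : Submodule ℂ V) with hHs
    have hHsmem : ∀ i, Hs i ∈ 𝓗 := fun i => (σ i).2
    have hHsinj : Function.Injective Hs := fun i j h => σ.injective (Subtype.ext h)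
    have hHsurj : ∀ H ∈ 𝓗, ∃ i, Hs i = H := fun H hH => ⟨σ.symm ⟨H, hH⟩, by simp [hHs]⟩
    have h𝓗eq : 𝓗 = Finset.univ.image Hs := by
      ext K
      simp only [Finset.mem_image, Finset.mem_univ, true_and]
      exact ⟨fun h => hHsurj K h, fun ⟨i, hi⟩ => hi ▸ hHsmem i⟩
    choose F hF0 hFker using fun i => harr (Hs i) (hHsmem i)
    have hspanF : Submodule.span ℂ (Set.range F) = ⊤ := by
      have htop := arrSpan_eq_top_of_essential hess
      rw [h𝓗eq, arrSpan_image_eq Hs F hFker] at htop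
      simpa using htop
    have hdep : ¬ LinearIndependent ℂ F := by
      intro hli
      have := hli.fintype_card_le_finrank
      rw [Subspace.dual_finrank_eq] at this
      simp only [Fintype.card_fin] at this
      omega
    obtain ⟨c, hcsum, i₁, hci₁⟩ := Fintype.not_linearIndependent_iff.mp hdep
    have hall : ∀ i, c i ≠ 0 := by
      by_contra hex
      push_neg at hex
      obtain ⟨i₀, hi₀⟩ := hex
      apply hirr
      set S := Finset.univ.filter (fun i => c i ≠ 0) with hS
      have hi₁S : i₁ ∈ S := by simp [hS, hci₁]
      have hi₀S : i₀ ∉ S := by simp [hS, hi₀]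
      refine ⟨S.image Hs, Sᶜ.image Hs, ⟨_, Finset.mem_image_of_mem _ hi₁S⟩,
        ⟨_, Finset.mem_image_of_mem _ (Finset.mem_compl.mpr hi₀S)⟩,
        (Finset.disjoint_image hHsinj).mpr disjoint_compl_right, ?_, ?_⟩
      · rw [← Finset.image_union, Finset.union_compl, ← h𝓗eq]
      · rw [arrSpan_image_eq Hs F hFker, arrSpan_image_eq Hs F hFker]
        set W₁ := Submodule.span ℂ (F '' ↑S) with hW₁
        set W₂ := Submodule.span ℂ (F '' ↑Sᶜ) with hW₂
        have hsum : ∑ i ∈ S, c i • F i = 0 := by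
          rw [← hcsum]
          apply Finset.sum_subset (Finset.subset_univ S)
          intro x _ hx
          have hcx : c x = 0 := by
            by_contra h
            exact hx (by simp [hS, h])
          simp [hcx]
        have hFi₁ : F i₁ ∈ Submodule.span ℂ (F '' ↑(S.erase i₁)) := by
          have h2 : c i₁ • F i₁ = - ∑ i ∈ S.erase i₁, c i • F i := by
            have h5 := Finset.sum_erase_add S (fun i => c i • F i) hi₁S
            rw [hsum] at h5
            rw [eq_neg_iff_add_eq_zero, add_comm]
            exact h5
          have h3 : F i₁ = (c i₁)⁻¹ • (c i₁ • F i₁) := by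
            rw [smul_smul, inv_mul_cancel₀ hci₁, one_smul]
          rw [h3, h2]
          refine Submodule.smul_mem _ _ (Submodule.neg_mem _ (Submodule.sum_mem _ ?_))
          intro i hi
          exact Submodule.smul_mem _ _
            (Submodule.subset_span ⟨i, Finset.mem_coe.mpr hi, rfl⟩)
        have hW1eq : W₁ = Submodule.span ℂ (F '' ↑(S.erase i₁)) := by
          rw [hW₁]
          conv_lhs => rw [← Finset.insert_erase hi₁S]
          rw [Finset.coe_insert, Set.image_insert_eq, Submodule.span_insert_eq_span hFi₁]
        have hr1 : Module.finrank ℂ W₁ ≤ S.card - 1 := by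
          rw [hW1eq]
          have h4 : F '' ↑(S.erase i₁) = (((S.erase i₁).image F : Finset _) : Set _) := by
            simp [Finset.coe_image]
          rw [h4]
          refine le_trans (finrank_span_finset_le_card _) ?_
          refine le_trans Finset.card_image_le ?_
          rw [Finset.card_erase_of_mem hi₁S]
        have hr2 : Module.finrank ℂ W₂ ≤ Sᶜ.card := by
          rw [hW₂]
          have h4 : F '' ↑Sᶜ = ((Sᶜ.image F : Finset _) : Set _) := by
            simp [Finset.coe_image]
          rw [h4]
          exact le_trans (finrank_span_finset_le_card _) Finset.card_image_le
        have hsup : W₁ ⊔ W₂ = ⊤ := by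
          rw [hW₁, hW₂, ← Submodule.span_union, ← Set.image_union, ← Finset.coe_union,
            Finset.union_compl, Finset.coe_univ, Set.image_univ, hspanF]
        have heq := Submodule.finrank_sup_add_finrank_inf_eq W₁ W₂
        rw [hsup] at heq
        have htop' : Module.finrank ℂ (⊤ : Submodule ℂ (Module.Dual ℂ V)) = n := by
          rw [finrank_top, Subspace.dual_finrank_eq]
        have hcards : S.card + Sᶜ.card = n + 1 := by
          rw [Finset.card_add_card_compl]
          simp
        have hS1 : 1 ≤ S.card := Finset.card_pos.mpr ⟨i₁, hi₁S⟩
        have h0 : Module.finrank ℂ ↥(W₁ ⊓ W₂) = 0 := by omega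
        exact disjoint_iff.mpr (Submodule.finrank_eq_zero.mp h0)
    -- all coefficients nonzero: build the isomorphism
    set G : Fin (n + 1) → Module.Dual ℂ V := fun i => c i • F i with hG
    have hGker : ∀ i, Hs i = LinearMap.ker (G i) := fun i => by
      rw [hFker i, hG]
      exact (LinearMap.ker_smul _ _ (hall i)).symm
    have hGsum : ∑ i, G i = 0 := hcsum
    set b : Fin n → Module.Dual ℂ V := fun j => G j.succ with hb
    have hG0 : G 0 = - ∑ j : Fin n, b j := by
      have h5 := Fin.sum_univ_succ G
      rw [hGsum] at h5
      exact eq_neg_of_add_eq_zero_left h5.symm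
    have hGmem : ∀ i, G i ∈ Submodule.span ℂ (Set.range b) := by
      intro i
      induction i using Fin.cases with
      | zero =>
        rw [hG0]
        exact Submodule.neg_mem _ (Submodule.sum_mem _ fun j _ =>
          Submodule.subset_span ⟨j, rfl⟩)
      | succ j => exact Submodule.subset_span ⟨j, rfl⟩
    have hspanb : ⊤ ≤ Submodule.span ℂ (Set.range b) := by
      rw [← hspanF, Submodule.span_le]
      rintro g ⟨i, rfl⟩
      have : F i = (c i)⁻¹ • G i := by
        rw [hG, smul_smul, inv_mul_cancel₀ (hall i), one_smul]
      rw [this]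
      exact Submodule.smul_mem _ _ (hGmem i)
    set T : V →ₗ[ℂ] (Fin n → ℂ) := LinearMap.pi b with hT
    have hTinj : Function.Injective T := by
      rw [← LinearMap.ker_eq_bot, hT, LinearMap.ker_pi, eq_bot_iff]
      intro x hx
      rw [Submodule.mem_iInf] at hx
      have hφ : ∀ φ : Module.Dual ℂ V, φ x = 0 := by
        intro φ
        have hφmem : φ ∈ Submodule.span ℂ (Set.range b) := hspanb Submodule.mem_top
        induction hφmem using Submodule.span_induction with
        | mem g hg =>
          obtain ⟨j, rfl⟩ := hg
          exact hx j
        | zero => simp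
        | add g h _ _ hgx hhx => simp [hgx, hhx]
        | smul a g _ hgx => simp [hgx]
      rw [Submodule.mem_bot]
      exact (Module.forall_dual_apply_eq_zero_iff ℂ x).mp hφ
    have hdim : Module.finrank ℂ V = Module.finrank ℂ (Fin n → ℂ) := by
      rw [Module.finrank_fin_fun]
    refine ⟨T.linearEquivOfInjective hTinj hdim, ?_⟩
    set e := T.linearEquivOfInjective hTinj hdim with he
    have heapp : ∀ v, e v = T v := fun v => rfl
    have hTes : ∀ x : Fin n → ℂ, T (e.symm x) = x := by
      intro x
      rw [← heapp, e.apply_symm_apply]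
    have keyS : ∀ j : Fin n, Submodule.map e.toLinearMap (Hs j.succ)
        = LinearMap.ker (LinearMap.proj j : (Fin n → ℂ) →ₗ[ℂ] ℂ) := by
      intro j
      rw [hGker, map_equiv_ker]
      ext x
      simp only [LinearMap.mem_ker, LinearMap.comp_apply, LinearEquiv.coe_coe,
        LinearMap.proj_apply]
      have h7 : G j.succ (e.symm x) = x j := by
        calc G j.succ (e.symm x) = T (e.symm x) j := rfl
        _ = x j := by rw [hTes]
      rw [h7]
    have key0 : Submodule.map e.toLinearMap (Hs 0)
        = LinearMap.ker (∑ i : Fin n, (LinearMap.proj i : (Fin n → ℂ) →ₗ[ℂ] ℂ)) := by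
      rw [hGker, map_equiv_ker]
      ext x
      simp only [LinearMap.mem_ker, LinearMap.comp_apply, LinearEquiv.coe_coe,
        LinearMap.coe_sum, Finset.sum_apply, LinearMap.proj_apply]
      have h6 : G 0 (e.symm x) = - ∑ j : Fin n, x j := by
        rw [hG0]
        simp only [LinearMap.neg_apply, LinearMap.coe_sum, Finset.sum_apply]
        congr 1
        apply Finset.sum_congr rfl
        intro j _
        calc b j (e.symm x) = T (e.symm x) j := rfl
        _ = x j := by rw [hTes]
      rw [h6, neg_eq_zero]
    rw [h𝓗eq, Finset.image_image]
    ext K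
    rw [stdArrangement]
    simp only [Finset.mem_image, Finset.mem_univ, true_and, Function.comp,
      Finset.mem_union, Finset.mem_singleton]
    constructor
    · rintro ⟨i, rfl⟩
      induction i using Fin.cases with
      | zero => exact Or.inr key0
      | succ j => exact Or.inl ⟨j, (keyS j).symm⟩
    · rintro (⟨j, rfl⟩ | rfl)
      · exact ⟨j.succ, keyS j⟩
      · exact ⟨0, key0⟩
  · rintro ⟨e, himg⟩
    constructor
    · have h1 := std_essential (Module.finrank ℂ V)
      rw [← himg, arrCentre_image] at h1
      rw [ArrEssential, eq_bot_iff]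
      intro x hx
      have hex : e x ∈ Submodule.map e.toLinearMap (arrCentre 𝓗) :=
        Submodule.mem_map_of_mem hx
      rw [h1, Submodule.mem_bot] at hex
      rw [Submodule.mem_bot]
      exact e.injective (by rw [hex, map_zero])
    · intro hred
      obtain ⟨𝓗₁, 𝓗₂, h1, h2, hd, hu, hsp⟩ := hred
      refine std_irreducible (Module.finrank ℂ V)
        ⟨𝓗₁.image (fun H => Submodule.map e.toLinearMap H),
          𝓗₂.image (fun H => Submodule.map e.toLinearMap H),
          h1.image _, h2.image _, ?_, ?_, ?_⟩
      · exact (Finset.disjoint_image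
          (Submodule.map_injective_of_injective e.injective)).mpr hd
      · rw [← Finset.image_union, hu, himg]
      · rw [arrSpan_image_equiv, arrSpan_image_equiv]
        exact disjoint_map_of_injective e.symm.dualMap.injective hsp
end
end
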